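/- Let p ≡ 1 (mod 8) be a prime and let σ = a + bi ∈ ℤ[i] be a Gaussian integer with norm a² + b² = p. Then σ is a quadratic residue modulo its conjugate σ̄, i.e. there exists τ ∈ ℤ[i] with σ ≡ τ² (mod σ̄). -/

import Mathlib

open scoped NumberTheorySymbols
lemma aux_jacobi_one (p : ℕ) (hp : p.Prime) (h8 : p % 8 = 1) (a b : ℤ)
    (hnorm : a ^ 2 + b ^ 2 = (p : ℤ)) : J(a | p) = 1 := by
  have hp4 : p % 4 = 1 := by omega
  have hpodd : Odd p := by rw [Nat.odd_iff]; omega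
  have hnsq : ∀ n : ℕ, n ^ 2 ≠ p := by
    intro n hn
    have hd : n ∣ p := ⟨n, by rw [← hn]; ring⟩
    rcases hp.eq_one_or_self_of_dvd n hd with h | h
    · subst h; simp at hn; have := hp.two_le; omega
    · subst h; nlinarith [hp.two_le]
  have ha0 : a ≠ 0 := by
    rintro rfl
    refine hnsq b.natAbs ?_
    have h : (b.natAbs : ℤ) ^ 2 = (p : ℤ) := by
      rw [← Int.abs_eq_natAbs, sq_abs]; linarith
    exact_mod_cast h
  have hgcd : Int.gcd a b = 1 := by
    set d := Int.gcd a b with hd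
    have h1 : (d : ℤ) ∣ a := Int.gcd_dvd_left a b
    have h2 : (d : ℤ) ∣ b := Int.gcd_dvd_right a b
    have h3 : (d : ℤ) ^ 2 ∣ (p : ℤ) := by rw [← hnorm]; exact dvd_add (pow_dvd_pow_of_dvd h1 2) (pow_dvd_pow_of_dvd h2 2)
    have h4 : d ^ 2 ∣ p := by exact_mod_cast h3
    rcases hp.eq_one_or_self_of_dvd _ h4 with h | h
    · nlinarith
    · exact absurd h (hnsq d)
  set n := a.natAbs with hn
  have hn0 : n ≠ 0 := Int.natAbs_ne_zero.mpr ha0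
  set k := n.factorization 2 with hk
  set m := n / 2 ^ k with hm
  have hnm : 2 ^ k * m = n := Nat.ordProj_mul_ordCompl_eq_self n 2
  have hmodd : Odd m := Nat.odd_iff.mpr (Nat.two_dvd_ne_zero.mp (Nat.not_dvd_ordCompl Nat.prime_two hn0))
  have hmdvd : (m : ℤ) ∣ a := by
    rw [← Int.natAbs_dvd_natAbs]
    simp only [Int.natAbs_natCast, ← hn]
    exact Dvd.intro_left _ hnm
  have key2 : J((2 : ℤ) | p) = 1 := by
    rw [jacobiSym.at_two hpodd, ZMod.χ₈_nat_mod_eight, h8]; decide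
  have keym : J((m : ℤ) | p) = 1 := by
    have hrec : J((m : ℤ) | p) = J((p : ℤ) | m) :=
      (jacobiSym.quadratic_reciprocity_one_mod_four hp4 hmodd).symm
    have hmod : (p : ℤ) % m = b ^ 2 % m := by
      have : (m : ℤ) ∣ b ^ 2 - p := by
        have : b ^ 2 - (p : ℤ) = -(a ^ 2) := by linarith
        rw [this, dvd_neg, pow_two]
        exact hmdvd.mul_right a
      exact (Int.modEq_iff_dvd.mpr this)
    have hcop : b.gcd (m : ℤ) = 1 := by
      have h1 : Nat.Coprime a.natAbs b.natAbs := hgcd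
      have h2 : m ∣ a.natAbs := Dvd.intro_left _ hnm
      have : Nat.Coprime b.natAbs m := Nat.Coprime.coprime_dvd_right h2 h1.symm
      simpa [Int.gcd] using this
    rw [hrec, jacobiSym.mod_left' hmod, jacobiSym.sq_one' hcop]
  have keyn : J((n : ℤ) | p) = 1 := by
    have : ((n : ℤ)) = (2 : ℤ) ^ k * (m : ℤ) := by exact_mod_cast hnm.symm
    rw [this, jacobiSym.mul_left, jacobiSym.pow_left, key2, keym, one_pow, one_mul]
  rcases le_or_gt 0 a with h | h
  · have he : ((n : ℤ)) = a := Int.natAbs_of_nonneg h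
    rwa [he] at keyn
  · have he : a = -(n : ℤ) := by rw [hn]; omega
    rw [he, jacobiSym.neg _ hpodd, ZMod.χ₄_nat_one_mod_four hp4, keyn, one_mul]

/-- If `p ≡ 1 (mod 8)` is prime and `σ = a + bi ∈ ℤ[i]` has norm `a² + b² = p`, then `σ` is a
square modulo its conjugate `σ̄`. -/
theorem stmt0 (p : ℕ) (hp : p.Prime) (h8 : p % 8 = 1) (a b : ℤ)
    (hnorm : a ^ 2 + b ^ 2 = (p : ℤ)) :
    ∃ τ : Zsqrtd (-1), star (⟨a, b⟩ : Zsqrtd (-1)) ∣ (⟨a, b⟩ : Zsqrtd (-1)) - τ ^ 2 := by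
  haveI : Fact p.Prime := ⟨hp⟩
  have hja : J(a | p) = 1 := aux_jacobi_one p hp h8 a b hnorm
  have hj2 : J((2 : ℤ) | p) = 1 := by
    rw [jacobiSym.at_two (by rw [Nat.odd_iff]; omega), ZMod.χ₈_nat_mod_eight, h8]; decide
  have hj : J(2 * a | p) = 1 := by rw [jacobiSym.mul_left, hj2, hja, one_mul]
  obtain ⟨s, hs⟩ := ZMod.isSquare_of_jacobiSym_eq_one hj
  haveI : NeZero p := ⟨hp.ne_zero⟩
  set t : ℤ := (s.val : ℤ) with ht
  have hcast : ((t ^ 2 - 2 * a : ℤ) : ZMod p) = 0 := by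
    have hts : ((t : ℤ) : ZMod p) = s := by
      rw [ht, Int.cast_natCast]
      exact ZMod.natCast_rightInverse s
    have hs' : 2 * (a : ZMod p) = s * s := by push_cast at hs; exact hs
    push_cast
    rw [hts, pow_two, ← hs']
    ring
  have hdvd : (p : ℤ) ∣ t ^ 2 - 2 * a := (ZMod.intCast_zmod_eq_zero_iff_dvd _ p).mp hcast
  obtain ⟨c, hc⟩ := hdvd
  refine ⟨⟨t, 0⟩, ⟨-1 - c * a, -(c * b)⟩, ?_⟩
  have h1 : t ^ 2 = 2 * a + p * c := by linarith
  ext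
  · simp only [Zsqrtd.re_sub, Zsqrtd.re_mul, Zsqrtd.re_star, Zsqrtd.im_star, pow_two,
      Zsqrtd.im_mul]
    linear_combination (-1 : ℤ) * h1 + c * hnorm
  · simp only [Zsqrtd.im_sub, Zsqrtd.im_mul, Zsqrtd.re_star, Zsqrtd.im_star, pow_two,
      Zsqrtd.re_mul]
    ring
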